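/- arXiv:1803.00542 — 3 statements merged into one kernel-verified Lean document; each statement's English description precedes it below -/
import Mathlib

section
/- Let M > 3 be a prime, χ a nontrivial Dirichlet character modulo M, and α, β, r₁, r₂, n integers with gcd(αβ, M) = 1, gcd(r₁r₂, M) = 1 and M | n. Then ℭ = χ(α β*) · R_M(r₂ − r₁ α β*) − χ(r₂ r₁*), where R_M(a) := ∑_{z=1}^{M−1} e(az/M) is the Ramanujan sum modulo M, and β*, r₁* denote inverses of β, r₁ modulo M. -/
/-- e(x) = exp(2πix). -/
noncomputable def e (x : ℝ) : ℂ := Complex.exp (2 * Real.pi * Complex.I * x)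

/-- The shifted character sum
ℭ = ∑_{z ∈ 𝔽_M^×, (n + β z̄, M) = 1} χ̄(r₁ + z) χ(r₂ + α ⋅ (n + β z̄)⁻¹). -/
noncomputable def frakC (M : ℕ) (χ : DirichletCharacter ℂ M) (α β r₁ r₂ n : ℤ) : ℂ :=
  ∑ z ∈ (Finset.Icc 1 (M - 1)).filter
      (fun z : ℕ => (n : ZMod M) + (β : ZMod M) * ((z : ZMod M))⁻¹ ≠ 0),
    (starRingEnd ℂ) (χ ((r₁ : ZMod M) + (z : ZMod M))) *
      χ ((r₂ : ZMod M) + (α : ZMod M) * ((n : ZMod M) + (β : ZMod M) * (z : ZMod M)⁻¹)⁻¹)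

/-- The Ramanujan sum R_M(a) = ∑_{z ∈ 𝔽_M^×} e(az/M). -/
noncomputable def ramanujanSum (M : ℕ) (a : ZMod M) : ℂ :=
  ∑ z ∈ Finset.Icc 1 (M - 1), e (((a * (z : ZMod M)).val : ℕ) / (M : ℝ))

lemma sum_Icc_zmod (M : ℕ) [NeZero M] (f : ZMod M → ℂ) :
    ∑ z ∈ Finset.Icc 1 (M - 1), f (z : ZMod M)
      = ∑ z ∈ Finset.univ.filter (fun x : ZMod M => x ≠ 0), f z := by
  apply Finset.sum_nbij' (fun z : ℕ => (z : ZMod M)) (fun x : ZMod M => x.val)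
  · intro a ha
    simp only [Finset.mem_Icc] at ha
    simp only [Finset.mem_filter, Finset.mem_univ, true_and]
    rw [Ne, ZMod.natCast_eq_zero_iff]
    intro hdvd
    have := Nat.le_of_dvd (by omega) hdvd
    omega
  · intro x hx
    simp only [Finset.mem_filter, Finset.mem_univ, true_and] at hx
    have h1 : x.val ≠ 0 := fun h => hx (by rwa [← ZMod.val_eq_zero])
    have h2 : x.val < M := ZMod.val_lt x
    simp only [Finset.mem_Icc]; omega
  · intro a ha
    simp only [Finset.mem_Icc] at ha
    exact ZMod.val_cast_of_lt (by omega)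
  · intro x hx
    exact ZMod.natCast_zmod_val x
  · intro a _; rfl

lemma e_eq_pow (M k : ℕ) (hM : 0 < M) :
    e ((k : ℝ) / (M : ℝ)) = Complex.exp (2 * Real.pi * Complex.I / M) ^ k := by
  rw [e, ← Complex.exp_nat_mul]
  congr 1
  have hM0 : (M : ℂ) ≠ 0 := Nat.cast_ne_zero.mpr hM.ne'
  push_cast
  field_simp

lemma zeta_ne_one (M : ℕ) (hM : 1 < M) :
    Complex.exp (2 * Real.pi * Complex.I / M) ≠ 1 := by
  intro h
  rw [Complex.exp_eq_one_iff] at h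
  obtain ⟨n, hn⟩ := h
  have hM0 : (M : ℂ) ≠ 0 := Nat.cast_ne_zero.mpr (by omega)
  have h2 : (2 * Real.pi * Complex.I) = (n : ℂ) * (2 * Real.pi * Complex.I) * M := by
    field_simp at hn
    linear_combination (2 * Real.pi * Complex.I) * hn
  have hpi : (2 * Real.pi * Complex.I) ≠ 0 := by
    simp [Real.pi_ne_zero, Complex.I_ne_zero]
  have h3 : (1 : ℂ) = (n : ℂ) * M := by
    apply mul_right_cancel₀ hpi
    rw [one_mul]; linear_combination h2
  have h4 : (1 : ℤ) = n * M := by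
    exact_mod_cast h3
  have : (M : ℤ) ∣ 1 := ⟨n, by linarith⟩
  have := Int.le_of_dvd one_pos this
  omega

lemma sum_e_all (M : ℕ) (hM : 1 < M) [NeZero M] :
    ∑ u : ZMod M, e ((u.val : ℝ) / (M : ℝ)) = 0 := by
  have h : ∑ u : ZMod M, e ((u.val : ℝ) / (M : ℝ))
      = ∑ k ∈ Finset.range M, e ((k : ℝ) / (M : ℝ)) := by
    apply Finset.sum_nbij' (fun u : ZMod M => u.val) (fun k : ℕ => (k : ZMod M))
    · intro u _; simpa [Finset.mem_range] using ZMod.val_lt u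
    · intro k _; exact Finset.mem_univ _
    · intro u _; exact ZMod.natCast_zmod_val u
    · intro k hk; exact ZMod.val_cast_of_lt (Finset.mem_range.mp hk)
    · intro u _; rfl
  rw [h]
  have h2 : ∀ k ∈ Finset.range M, e ((k : ℝ) / (M : ℝ))
      = Complex.exp (2 * Real.pi * Complex.I / M) ^ k :=
    fun k _ => e_eq_pow M k (by omega)
  rw [Finset.sum_congr rfl h2, geom_sum_eq (zeta_ne_one M hM)]
  have : Complex.exp (2 * Real.pi * Complex.I / M) ^ M = 1 := by
    rw [← Complex.exp_nat_mul]
    have hM0 : (M : ℂ) ≠ 0 := Nat.cast_ne_zero.mpr (by omega)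
    have : (M : ℂ) * (2 * Real.pi * Complex.I / M) = 2 * Real.pi * Complex.I := by
      field_simp
    rw [this]
    exact Complex.exp_two_pi_mul_I
  rw [this]
  simp

lemma card_ne_zero (M : ℕ) [NeZero M] :
    (Finset.univ.filter (fun x : ZMod M => x ≠ 0)).card = M - 1 := by
  rw [Finset.filter_ne', Finset.card_erase_of_mem (Finset.mem_univ _)]
  simp [ZMod.card]

lemma ramanujan_prime (M : ℕ) (hM : M.Prime) (a : ZMod M) :
    ramanujanSum M a = if a = 0 then ((M : ℂ) - 1) else -1 := by
  haveI : Fact M.Prime := ⟨hM⟩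
  have hM1 : 1 < M := hM.one_lt
  rw [ramanujanSum, sum_Icc_zmod M (fun w => e (((a * w).val : ℕ) / (M : ℝ)))]
  by_cases ha : a = 0
  · subst ha
    simp only [if_pos rfl]
    have : ∀ w ∈ Finset.univ.filter (fun x : ZMod M => x ≠ 0),
        e ((((0 : ZMod M) * w).val : ℕ) / (M : ℝ)) = 1 := by
      intro w _
      simp [e, ZMod.val_zero]
    rw [Finset.sum_congr rfl this, Finset.sum_const, card_ne_zero, nsmul_eq_mul, mul_one]
    rw [Nat.cast_sub hM1.le, Nat.cast_one]
    simp
  · rw [if_neg ha]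
    -- reindex w ↦ a * w
    have hbij : ∑ w ∈ Finset.univ.filter (fun x : ZMod M => x ≠ 0),
          e (((a * w).val : ℕ) / (M : ℝ))
        = ∑ u ∈ Finset.univ.filter (fun x : ZMod M => x ≠ 0), e ((u.val : ℕ) / (M : ℝ)) := by
      apply Finset.sum_nbij' (fun w => a * w) (fun u => a⁻¹ * u)
      · intro w hw
        simp only [Finset.mem_filter, Finset.mem_univ, true_and] at hw ⊢
        exact mul_ne_zero ha hw
      · intro u hu
        simp only [Finset.mem_filter, Finset.mem_univ, true_and] at hu ⊢
        exact mul_ne_zero (inv_ne_zero ha) hu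
      · intro w _; field_simp
      · intro u _; field_simp
      · intro w _; rfl
    rw [hbij]
    have hsplit : ∑ u : ZMod M, e ((u.val : ℕ) / (M : ℝ))
        = e (((0 : ZMod M).val : ℕ) / (M : ℝ))
          + ∑ u ∈ Finset.univ.filter (fun x : ZMod M => x ≠ 0), e ((u.val : ℕ) / (M : ℝ)) := by
      rw [Finset.filter_ne', ← Finset.add_sum_erase _ _ (Finset.mem_univ (0 : ZMod M))]
    have h0 : e (((0 : ZMod M).val : ℕ) / (M : ℝ)) = 1 := by simp [e, ZMod.val_zero]
    have hall := sum_e_all M hM1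
    rw [hall, h0] at hsplit
    linear_combination -hsplit

lemma conj_chi {M : ℕ} [Fact M.Prime] (χ : DirichletCharacter ℂ M) (u : ZMod M) :
    (starRingEnd ℂ) (χ u) = χ u⁻¹ := by
  by_cases hu : u = 0
  · subst hu
    rw [inv_zero, MulChar.map_nonunit χ (by simp [isUnit_zero_iff])]
    simp
  · have hunit : IsUnit u := isUnit_iff_ne_zero.mpr hu
    have hnorm : ‖χ u‖ = 1 := by
      simpa using χ.unit_norm_eq_one hunit.unit
    have h1 : (starRingEnd ℂ) (χ u) * χ u = 1 := by
      rw [mul_comm, Complex.mul_conj]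
      norm_cast
      rw [Complex.normSq_eq_norm_sq, hnorm]
      norm_num
    have h2 : χ u⁻¹ * χ u = 1 := by
      rw [← map_mul, inv_mul_cancel₀ hu, map_one]
    have hne : χ u ≠ 0 := fun h => by simp [h] at hnorm
    exact mul_right_cancel₀ hne (h1.trans h2.symm)

lemma charSum (M : ℕ) [NeZero M] (hM : M.Prime) (χ : DirichletCharacter ℂ M) (hχ : χ ≠ 1)
    (c r₁ r₂ : ZMod M) (hc : c ≠ 0) (hr1 : r₁ ≠ 0) :
    ∑ z ∈ Finset.univ.filter (fun x : ZMod M => x ≠ 0),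
        (starRingEnd ℂ) (χ (r₁ + z)) * χ (r₂ + c * z)
      = χ c * (if r₂ - r₁ * c = 0 then ((M : ℂ) - 1) else -1) - χ (r₂ * r₁⁻¹) := by
  haveI : Fact M.Prime := ⟨hM⟩
  have hM1 : 1 < M := hM.one_lt
  set F : ZMod M → ℂ := fun z => (starRingEnd ℂ) (χ (r₁ + z)) * χ (r₂ + c * z) with hF
  -- Step A: add back the z = 0 term
  have hA : ∑ z ∈ Finset.univ.filter (fun x : ZMod M => x ≠ 0), F z
      = (∑ z : ZMod M, F z) - F 0 := by
    rw [Finset.filter_ne']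
    rw [← Finset.add_sum_erase _ F (Finset.mem_univ (0 : ZMod M))]
    ring
  have hF0 : F 0 = χ (r₂ * r₁⁻¹) := by
    simp only [hF, add_zero, mul_zero]
    rw [conj_chi, ← map_mul, mul_comm]
  -- Step B: translate z ↦ z - r₁
  set G : ZMod M → ℂ := fun u => χ u⁻¹ * χ ((r₂ - c * r₁) + c * u) with hG
  have hB : ∑ z : ZMod M, F z = ∑ u : ZMod M, G u := by
    apply Fintype.sum_equiv (Equiv.addLeft r₁)
    intro z
    simp only [hF, hG, Equiv.coe_addLeft]
    rw [conj_chi]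
    congr 2
    ring
  -- Step C: pull out χ c
  set b : ZMod M := (r₂ - c * r₁) * c⁻¹ with hb
  have hC : ∑ u : ZMod M, G u = χ c * ∑ u : ZMod M, χ u⁻¹ * χ (b + u) := by
    rw [Finset.mul_sum]
    apply Finset.sum_congr rfl
    intro u _
    have harg : (r₂ - c * r₁) + c * u = c * (b + u) := by
      rw [hb]; field_simp
    show χ u⁻¹ * χ ((r₂ - c * r₁) + c * u) = _
    rw [harg, map_mul]
    ring
  -- Step D: drop u = 0 term
  have hD : ∑ u : ZMod M, χ u⁻¹ * χ (b + u)
      = ∑ u ∈ Finset.univ.filter (fun x : ZMod M => x ≠ 0), χ u⁻¹ * χ (b + u) := by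
    rw [Finset.filter_ne']
    rw [← Finset.add_sum_erase _ _ (Finset.mem_univ (0 : ZMod M))]
    have : χ (0 : ZMod M)⁻¹ = 0 := by
      rw [inv_zero]
      exact MulChar.map_nonunit χ (by simp [isUnit_zero_iff])
    rw [this]
    ring
  -- Step E: rewrite terms and substitute v = u⁻¹
  have hE : ∑ u ∈ Finset.univ.filter (fun x : ZMod M => x ≠ 0), χ u⁻¹ * χ (b + u)
      = ∑ v ∈ Finset.univ.filter (fun x : ZMod M => x ≠ 0), χ (b * v + 1) := by
    apply Finset.sum_nbij' (fun u : ZMod M => u⁻¹) (fun v : ZMod M => v⁻¹)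
    · intro u hu
      simp only [Finset.mem_filter, Finset.mem_univ, true_and] at hu ⊢
      exact inv_ne_zero hu
    · intro v hv
      simp only [Finset.mem_filter, Finset.mem_univ, true_and] at hv ⊢
      exact inv_ne_zero hv
    · intro u _; exact inv_inv u
    · intro v _; exact inv_inv v
    · intro u hu
      simp only [Finset.mem_filter, Finset.mem_univ, true_and] at hu
      rw [← map_mul]
      congr 1
      field_simp
  -- Step F: evaluate
  have hF2 : ∑ v ∈ Finset.univ.filter (fun x : ZMod M => x ≠ 0), χ (b * v + 1)
      = if r₂ - r₁ * c = 0 then ((M : ℂ) - 1) else -1 := by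
    have hbiff : b = 0 ↔ r₂ - r₁ * c = 0 := by
      rw [hb, mul_eq_zero]
      constructor
      · rintro (h | h)
        · rw [← h]; ring
        · exact absurd h (inv_ne_zero hc)
      · intro h; left; rw [← h]; ring
    by_cases hb0 : r₂ - r₁ * c = 0
    · rw [if_pos hb0]
      have hbz : b = 0 := hbiff.mpr hb0
      have : ∀ v ∈ Finset.univ.filter (fun x : ZMod M => x ≠ 0), χ (b * v + 1) = 1 := by
        intro v _; rw [hbz]; simp
      rw [Finset.sum_congr rfl this, Finset.sum_const, card_ne_zero, nsmul_eq_mul, mul_one,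
        Nat.cast_sub hM1.le, Nat.cast_one]
    · rw [if_neg hb0]
      have hbz : b ≠ 0 := fun h => hb0 (hbiff.mp h)
      have hre : ∑ v ∈ Finset.univ.filter (fun x : ZMod M => x ≠ 0), χ (b * v + 1)
          = ∑ w ∈ Finset.univ.filter (fun x : ZMod M => x ≠ 1), χ w := by
        apply Finset.sum_nbij' (fun v : ZMod M => b * v + 1) (fun w : ZMod M => (w - 1) * b⁻¹)
        · intro v hv
          simp only [Finset.mem_filter, Finset.mem_univ, true_and] at hv ⊢
          intro h
          apply hv
          have : b * v = 0 := by linear_combination h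
          rcases mul_eq_zero.mp this with h' | h'
          · exact absurd h' hbz
          · exact h'
        · intro w hw
          simp only [Finset.mem_filter, Finset.mem_univ, true_and] at hw ⊢
          intro h
          apply hw
          rcases mul_eq_zero.mp h with h' | h'
          · linear_combination h'
          · exact absurd h' (inv_ne_zero hbz)
        · intro v _; field_simp; ring
        · intro w _; field_simp; ring
        · intro v _; rfl
      rw [hre]
      have hsplit : ∑ w : ZMod M, χ w
          = χ 1 + ∑ w ∈ Finset.univ.filter (fun x : ZMod M => x ≠ 1), χ w := by
        rw [Finset.filter_ne', ← Finset.add_sum_erase _ _ (Finset.mem_univ (1 : ZMod M))]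
      rw [MulChar.sum_eq_zero_of_ne_one hχ, map_one] at hsplit
      linear_combination -hsplit
  have hfin := hA
  rw [hF0, hB, hC, hD, hE, hF2] at hfin
  exact hfin

/-- If M | n then ℭ = χ(αβ̄) R_M(r₂ − r₁αβ̄) − χ(r₂ r̄₁). -/
theorem frakC_n_divisible (M : ℕ) (hM : M.Prime) (hM3 : 3 < M)
    (χ : DirichletCharacter ℂ M) (hχ : χ ≠ 1)
    (α β r₁ r₂ n : ℤ) (hαβ : Int.gcd (α * β) M = 1) (hr : Int.gcd (r₁ * r₂) M = 1)
    (hn : (M : ℤ) ∣ n) :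
    frakC M χ α β r₁ r₂ n =
      χ ((α : ZMod M) * (β : ZMod M)⁻¹) *
          ramanujanSum M ((r₂ : ZMod M) - (r₁ : ZMod M) * (α : ZMod M) * (β : ZMod M)⁻¹) -
        χ ((r₂ : ZMod M) * (r₁ : ZMod M)⁻¹) := by
  haveI : Fact M.Prime := ⟨hM⟩
  haveI : NeZero M := ⟨hM.pos.ne'⟩
  have hn0 : (n : ZMod M) = 0 := (ZMod.intCast_zmod_eq_zero_iff_dvd n M).mpr hn
  have key : ∀ (x y : ℤ), Int.gcd (x * y) M = 1 →
      (x : ZMod M) ≠ 0 ∧ (y : ZMod M) ≠ 0 := by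
    intro x y hxy
    have hne : ((x * y : ℤ) : ZMod M) ≠ 0 := by
      intro h
      rw [ZMod.intCast_zmod_eq_zero_iff_dvd] at h
      have hd : (M : ℤ) ∣ (Int.gcd (x * y) M : ℤ) := Int.dvd_coe_gcd h dvd_rfl
      rw [hxy] at hd
      have := Int.le_of_dvd one_pos hd
      omega
    push_cast at hne
    exact ⟨fun h => hne (by rw [h, zero_mul]), fun h => hne (by rw [h, mul_zero])⟩
  obtain ⟨hα, hβ⟩ := key α β hαβ
  obtain ⟨hr1, hr2⟩ := key r₁ r₂ hr
  have hc : (α : ZMod M) * (β : ZMod M)⁻¹ ≠ 0 := mul_ne_zero hα (inv_ne_zero hβ)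
  rw [frakC]
  have hfilt : (Finset.Icc 1 (M - 1)).filter
      (fun z : ℕ => (n : ZMod M) + (β : ZMod M) * ((z : ZMod M))⁻¹ ≠ 0)
      = Finset.Icc 1 (M - 1) := by
    apply Finset.filter_true_of_mem
    intro z hz
    simp only [Finset.mem_Icc] at hz
    have hz0 : (z : ZMod M) ≠ 0 := by
      rw [Ne, ZMod.natCast_eq_zero_iff]
      intro hdvd
      have := Nat.le_of_dvd (by omega) hdvd
      omega
    rw [hn0, zero_add]
    exact mul_ne_zero hβ (inv_ne_zero hz0)
  rw [hfilt]
  have hterm : ∀ z : ZMod M,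
      (starRingEnd ℂ) (χ ((r₁ : ZMod M) + z)) *
        χ ((r₂ : ZMod M) + (α : ZMod M) * ((n : ZMod M) + (β : ZMod M) * z⁻¹)⁻¹)
      = (starRingEnd ℂ) (χ ((r₁ : ZMod M) + z)) *
        χ ((r₂ : ZMod M) + ((α : ZMod M) * (β : ZMod M)⁻¹) * z) := by
    intro z
    congr 2
    rw [hn0, zero_add, mul_inv, inv_inv]
    ring
  calc ∑ z ∈ Finset.Icc 1 (M - 1),
        (starRingEnd ℂ) (χ ((r₁ : ZMod M) + (z : ZMod M))) *
          χ ((r₂ : ZMod M) + (α : ZMod M) * ((n : ZMod M) + (β : ZMod M) * ((z : ZMod M))⁻¹)⁻¹)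
      = ∑ z ∈ Finset.Icc 1 (M - 1),
          (starRingEnd ℂ) (χ ((r₁ : ZMod M) + (z : ZMod M))) *
            χ ((r₂ : ZMod M) + ((α : ZMod M) * (β : ZMod M)⁻¹) * (z : ZMod M)) := by
        exact Finset.sum_congr rfl (fun z _ => hterm (z : ZMod M))
    _ = ∑ z ∈ Finset.univ.filter (fun x : ZMod M => x ≠ 0),
          (starRingEnd ℂ) (χ ((r₁ : ZMod M) + z)) *
            χ ((r₂ : ZMod M) + ((α : ZMod M) * (β : ZMod M)⁻¹) * z) :=
        sum_Icc_zmod M (fun x : ZMod M => (starRingEnd ℂ) (χ ((r₁ : ZMod M) + x)) *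
          χ ((r₂ : ZMod M) + ((α : ZMod M) * (β : ZMod M)⁻¹) * x))
    _ = χ ((α : ZMod M) * (β : ZMod M)⁻¹) *
          (if (r₂ : ZMod M) - (r₁ : ZMod M) * ((α : ZMod M) * (β : ZMod M)⁻¹) = 0
            then ((M : ℂ) - 1) else -1) - χ ((r₂ : ZMod M) * (r₁ : ZMod M)⁻¹) :=
        charSum M hM χ hχ _ _ _ hc hr1
    _ = χ ((α : ZMod M) * (β : ZMod M)⁻¹) *
          ramanujanSum M ((r₂ : ZMod M) - (r₁ : ZMod M) * (α : ZMod M) * (β : ZMod M)⁻¹) -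
          χ ((r₂ : ZMod M) * (r₁ : ZMod M)⁻¹) := by
        rw [ramanujan_prime M hM]
        rw [mul_assoc]
end

section
/- Let M > 3 be a prime and χ a nontrivial Dirichlet character modulo M whose square χ² is also nontrivial (i.e. χ is not a quadratic character). Let α, β, r₁, r₂, n be integers with gcd(αβ, M) = 1, gcd(r₁r₂, M) = 1, M ∤ n, and suppose r₁ ≡ n* β (mod M) and r₂ ≡ −n* α (mod M), where n* denotes an inverse of n modulo M. Then ℭ = −χ(n r₂ β*), where β* denotes an inverse of β modulo M. -/
/-- If M ∤ n, r₁ ≡ n̄β and r₂ ≡ −n̄α (mod M), and χ is not quadratic,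
then ℭ = −χ(n r₂ β̄). -/
theorem frakC_degenerate_not_quadratic (M : ℕ) (hM : M.Prime) (hM3 : 3 < M)
    (χ : DirichletCharacter ℂ M) (hχ : χ ≠ 1) (hχ2 : χ ^ 2 ≠ 1)
    (α β r₁ r₂ n : ℤ) (hαβ : Int.gcd (α * β) M = 1) (hr : Int.gcd (r₁ * r₂) M = 1)
    (hn : ¬ (M : ℤ) ∣ n)
    (h1 : (r₁ : ZMod M) = (n : ZMod M)⁻¹ * (β : ZMod M))
    (h2 : (r₂ : ZMod M) = -((n : ZMod M)⁻¹ * (α : ZMod M))) :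
    frakC M χ α β r₁ r₂ n = -χ ((n : ZMod M) * (r₂ : ZMod M) * (β : ZMod M)⁻¹) := by
  haveI : Fact M.Prime := ⟨hM⟩
  haveI : Fact (1 < M) := ⟨hM.one_lt⟩
  have hN : (n : ZMod M) ≠ 0 := fun h => hn ((ZMod.intCast_zmod_eq_zero_iff_dvd n M).mp h)
  have hMne1 : ¬ IsUnit ((M : ℤ)) := by
    rw [Int.isUnit_iff]; omega
  have hAB : (α : ZMod M) * (β : ZMod M) ≠ 0 := by
    intro h
    rw [← Int.cast_mul, ZMod.intCast_zmod_eq_zero_iff_dvd] at h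
    exact hMne1 ((Int.isCoprime_iff_gcd_eq_one.mpr hαβ).symm.isUnit_of_dvd' dvd_rfl h)
  have hA : (α : ZMod M) ≠ 0 := fun h => hAB (by rw [h, zero_mul])
  have hB : (β : ZMod M) ≠ 0 := fun h => hAB (by rw [h, mul_zero])
  have hr1 : (r₁ : ZMod M) ≠ 0 := by
    rw [h1]; exact mul_ne_zero (inv_ne_zero hN) hB
  set ψ : MulChar (ZMod M) ℂ := (χ ^ 2)⁻¹ with hψdef
  have hψ1 : ψ ≠ 1 := fun h => hχ2 (inv_eq_one.mp h)
  set c : ZMod M := -((α : ZMod M) * (β : ZMod M)) * (((n : ZMod M)) ^ 2)⁻¹ with hc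
  -- The degeneracy condition: for nonzero x, n + β x⁻¹ = 0 iff x = -r₁.
  have cond_iff : ∀ x : ZMod M, x ≠ 0 →
      ((n : ZMod M) + (β : ZMod M) * x⁻¹ = 0 ↔ x = -(r₁ : ZMod M)) := by
    intro x hx
    constructor
    · intro h
      have h' := mul_eq_zero_of_left h x
      rw [add_mul, mul_assoc, inv_mul_cancel₀ hx, mul_one] at h'
      rw [h1]
      have hgoal : x = -((n : ZMod M)⁻¹ * (β : ZMod M)) := by
        field_simp
        linear_combination h'
      exact hgoal
    · intro h
      rw [h, h1, inv_neg, mul_inv, inv_inv]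
      field_simp
      ring
  set S := (Finset.Icc 1 (M - 1)).filter
      (fun z : ℕ => (n : ZMod M) + (β : ZMod M) * ((z : ZMod M))⁻¹ ≠ 0) with hS
  have hzS : ∀ z ∈ S, (z : ZMod M) ≠ 0 ∧ (z : ZMod M) ≠ -(r₁ : ZMod M) ∧ z < M := by
    intro z hz
    rw [hS, Finset.mem_filter, Finset.mem_Icc] at hz
    obtain ⟨⟨hz1, hz2⟩, hcond⟩ := hz
    have hz0 : (z : ZMod M) ≠ 0 := by
      intro h
      rw [ZMod.natCast_eq_zero_iff] at h
      have := Nat.le_of_dvd (by omega) h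
      omega
    exact ⟨hz0, fun h => hcond ((cond_iff _ hz0).mpr h), by omega⟩
  -- transform each summand
  have step1 : ∀ z ∈ S,
      (starRingEnd ℂ) (χ ((r₁ : ZMod M) + (z : ZMod M))) *
        χ ((r₂ : ZMod M) + (α : ZMod M) * ((n : ZMod M) + (β : ZMod M) * (z : ZMod M)⁻¹)⁻¹)
      = χ c * ψ ((r₁ : ZMod M) + (z : ZMod M)) := by
    intro z hz
    obtain ⟨hz0, hzr, _⟩ := hzS z hz
    have hu : (r₁ : ZMod M) + (z : ZMod M) ≠ 0 := by
      intro h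
      exact hzr (by linear_combination h)
    have hu' : (n : ZMod M)⁻¹ * (β : ZMod M) + (z : ZMod M) ≠ 0 := by
      rwa [h1] at hu
    have key : (r₂ : ZMod M) + (α : ZMod M) * ((n : ZMod M) + (β : ZMod M) * (z : ZMod M)⁻¹)⁻¹
        = c * ((r₁ : ZMod M) + (z : ZMod M))⁻¹ := by
      rw [hS, Finset.mem_filter] at hz
      have hcond : (n : ZMod M) + (β : ZMod M) * (z : ZMod M)⁻¹ ≠ 0 := hz.2
      have hfact : (n : ZMod M) + (β : ZMod M) * (z : ZMod M)⁻¹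
          = (n : ZMod M) * ((r₁ : ZMod M) + (z : ZMod M)) * (z : ZMod M)⁻¹ := by
        rw [h1]; field_simp; ring
      have hd : (z : ZMod M) * (n : ZMod M) + (β : ZMod M) ≠ 0 := fun h => hu' (by
        have hiden : ((n : ZMod M))⁻¹ * ((z : ZMod M) * (n : ZMod M) + (β : ZMod M))
            = (n : ZMod M)⁻¹ * (β : ZMod M) + (z : ZMod M) := by
          field_simp
          ring
        rw [← hiden, h, mul_zero])
      have hd2 : (z : ZMod M) * (n : ZMod M) ^ 3 + (n : ZMod M) ^ 2 * (β : ZMod M) ≠ 0 := by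
        intro h
        apply hd
        have h3 : ((n : ZMod M) ^ 2)⁻¹ * ((z : ZMod M) * (n : ZMod M) ^ 3
            + (n : ZMod M) ^ 2 * (β : ZMod M))
            = (z : ZMod M) * (n : ZMod M) + (β : ZMod M) := by
          field_simp
        rw [← h3, h, mul_zero]
      rw [hfact, mul_inv, mul_inv, inv_inv, h2, h1, hc]
      have hd' : (β : ZMod M) + (z : ZMod M) * (n : ZMod M) ≠ 0 := by
        rwa [add_comm]
      field_simp [hd, hd2]
      have hd3 : (n : ZMod M) * (z : ZMod M) + (β : ZMod M) ≠ 0 := by rwa [mul_comm] at hd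
      have hD : ((n : ZMod M) * (z : ZMod M) + (β : ZMod M)) * ((n : ZMod M) * (z : ZMod M) + (β : ZMod M))⁻¹ = 1 := mul_inv_cancel₀ hd3
      linear_combination hD
    have hstar : (starRingEnd ℂ) (χ ((r₁ : ZMod M) + (z : ZMod M)))
        = (χ ((r₁ : ZMod M) + (z : ZMod M)))⁻¹ := by
      have h' := MulChar.star_apply' χ ((r₁ : ZMod M) + (z : ZMod M))
      rw [MulChar.inv_apply_eq_inv'] at h'
      exact h'
    rw [key, map_mul, hstar, ← MulChar.inv_apply', MulChar.inv_apply_eq_inv',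
      hψdef, ← inv_pow, MulChar.pow_apply' _ two_ne_zero, MulChar.inv_apply_eq_inv']
    ring
  have sum0 : ∑ u : ZMod M, ψ u = 0 := MulChar.sum_eq_zero_of_ne_one hψ1
  have hψ0 : ψ (0 : ZMod M) = 0 := ψ.map_nonunit (by simp)
  -- reindex
  have reindex : ∑ z ∈ S, ψ ((r₁ : ZMod M) + (z : ZMod M))
      = ∑ u ∈ Finset.univ.filter (fun u : ZMod M => u ≠ r₁ ∧ u ≠ 0), ψ u := by
    refine Finset.sum_nbij' (i := fun z : ℕ => (r₁ : ZMod M) + (z : ZMod M))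
      (j := fun u : ZMod M => (u - (r₁ : ZMod M)).val) ?_ ?_ ?_ ?_ ?_
    · intro z hz
      obtain ⟨hz0, hzr, _⟩ := hzS z hz
      simp only [Finset.mem_filter, Finset.mem_univ, true_and]
      constructor
      · intro h; exact hz0 (by linear_combination h)
      · intro h; exact hzr (by linear_combination h)
    · intro u hu
      simp only [Finset.mem_filter, Finset.mem_univ, true_and] at hu
      obtain ⟨hur, hu0⟩ := hu
      have hsub : u - (r₁ : ZMod M) ≠ 0 := sub_ne_zero.mpr hur
      have hval : (((u - (r₁ : ZMod M)).val : ℕ) : ZMod M) = u - (r₁ : ZMod M) := by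
        simp [ZMod.natCast_val, ZMod.cast_id]
      show (u - (r₁ : ZMod M)).val ∈ S
      rw [hS, Finset.mem_filter, Finset.mem_Icc]
      refine ⟨⟨?_, ?_⟩, ?_⟩
      · have : (u - (r₁ : ZMod M)).val ≠ 0 := fun h => hsub (by
          rwa [ZMod.val_eq_zero] at h)
        omega
      · have := (u - (r₁ : ZMod M)).val_lt
        omega
      · rw [hval]
        intro h
        have := (cond_iff _ hsub).mp h
        exact hu0 (by linear_combination this)
    · intro z hz
      obtain ⟨_, _, hzM⟩ := hzS z hz
      simp only [add_sub_cancel_left]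
      rw [ZMod.val_natCast_of_lt hzM]
    · intro u hu
      show (r₁ : ZMod M) + (((u - (r₁ : ZMod M)).val : ℕ) : ZMod M) = u
      have hval : (((u - (r₁ : ZMod M)).val : ℕ) : ZMod M) = u - (r₁ : ZMod M) := by
        simp [ZMod.natCast_val, ZMod.cast_id]
      rw [hval]; ring
    · intro z hz; rfl
  -- put it together
  have hTsum : ∑ u ∈ Finset.univ.filter (fun u : ZMod M => u ≠ r₁ ∧ u ≠ 0), ψ u
      = -ψ (r₁ : ZMod M) := by
    have hTe : Finset.univ.filter (fun u : ZMod M => u ≠ r₁ ∧ u ≠ 0)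
        = ((Finset.univ : Finset (ZMod M)).erase 0).erase (r₁ : ZMod M) := by
      ext u
      simp [Finset.mem_erase, and_comm]
    rw [hTe, Finset.sum_erase_eq_sub (Finset.mem_erase.mpr ⟨hr1, Finset.mem_univ _⟩),
      Finset.sum_erase_eq_sub (Finset.mem_univ _), sum0, hψ0]
    ring
  have final : χ c * ψ (r₁ : ZMod M)
      = χ ((n : ZMod M) * (r₂ : ZMod M) * (β : ZMod M)⁻¹) := by
    rw [hψdef, ← inv_pow, MulChar.pow_apply' _ two_ne_zero, MulChar.inv_apply',
      ← map_pow, ← map_mul]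
    congr 1
    rw [hc, h1, h2]
    field_simp
  calc frakC M χ α β r₁ r₂ n
      = ∑ z ∈ S, χ c * ψ ((r₁ : ZMod M) + (z : ZMod M)) := Finset.sum_congr rfl step1
    _ = χ c * ∑ z ∈ S, ψ ((r₁ : ZMod M) + (z : ZMod M)) := by rw [Finset.mul_sum]
    _ = χ c * (-ψ (r₁ : ZMod M)) := by rw [reindex, hTsum]
    _ = -(χ c * ψ (r₁ : ZMod M)) := by ring
    _ = -χ ((n : ZMod M) * (r₂ : ZMod M) * (β : ZMod M)⁻¹) := by rw [final]
end

section
/- Let M > 3 be a prime, χ a nontrivial Dirichlet character modulo M, and α, β, r₁, r₂, n integers with gcd(αβ, M) = 1, gcd(r₁r₂, M) = 1, M ∤ n, and n ≡ β r₁* − α r₂* (mod M), where r₁*, r₂* denote inverses of r₁, r₂ modulo M. Then ℭ = −χ²(r₂ r₁*) χ(β α*) − χ(r₂ r₁*), where α* denotes an inverse of α modulo M. -/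
lemma conj_mul_self_char {M : ℕ} [Fact M.Prime] (χ : DirichletCharacter ℂ M)
    {x : ZMod M} (hx : x ≠ 0) : (starRingEnd ℂ) (χ x) * χ x = 1 := by
  have hu : IsUnit x := isUnit_iff_ne_zero.mpr hx
  have h1 : ‖χ x‖ = 1 := by
    have := DirichletCharacter.unit_norm_eq_one χ hu.unit
    rwa [hu.unit_spec] at this
  have := Complex.mul_conj (χ x)
  rw [mul_comm] at this
  rw [this, Complex.normSq_eq_norm_sq, h1]
  norm_num

/-- If M ∤ n and n ≡ β r̄₁ − α r̄₂ (mod M), then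
ℭ = −χ²(r₂ r̄₁) χ(β ᾱ) − χ(r₂ r̄₁). -/
theorem frakC_special_n (M : ℕ) (hM : M.Prime) (hM3 : 3 < M)
    (χ : DirichletCharacter ℂ M) (hχ : χ ≠ 1)
    (α β r₁ r₂ n : ℤ) (hαβ : Int.gcd (α * β) M = 1) (hr : Int.gcd (r₁ * r₂) M = 1)
    (hn : ¬ (M : ℤ) ∣ n)
    (hcong : (n : ZMod M) = (β : ZMod M) * (r₁ : ZMod M)⁻¹ - (α : ZMod M) * (r₂ : ZMod M)⁻¹) :
    frakC M χ α β r₁ r₂ n =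
      -(χ ((r₂ : ZMod M) * (r₁ : ZMod M)⁻¹)) ^ 2 * χ ((β : ZMod M) * (α : ZMod M)⁻¹) -
        χ ((r₂ : ZMod M) * (r₁ : ZMod M)⁻¹) := by
  haveI : Fact M.Prime := ⟨hM⟩
  haveI : NeZero M := ⟨hM.ne_zero⟩
  set A : ZMod M := (α : ZMod M) with hA_def
  set B : ZMod M := (β : ZMod M) with hB_def
  set R₁ : ZMod M := (r₁ : ZMod M) with hR1_def
  set R₂ : ZMod M := (r₂ : ZMod M) with hR2_def
  set N : ZMod M := (n : ZMod M) with hN_def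
  -- nonvanishing
  have key : ∀ x : ℤ, ¬ (M : ℤ) ∣ x → ((x : ZMod M) ≠ 0) := by
    intro x hx h
    exact hx ((ZMod.intCast_zmod_eq_zero_iff_dvd x M).mp h)
  have hdvd : ∀ x y : ℤ, Int.gcd (x * y) M = 1 → ¬ (M : ℤ) ∣ x ∧ ¬ (M : ℤ) ∣ y := by
    intro x y h
    have hc : IsCoprime (x * y) (M : ℤ) := Int.isCoprime_iff_gcd_eq_one.mpr h
    obtain ⟨u, v, huv⟩ := hc
    have hM1 : ¬ (M : ℤ) ∣ 1 := by
      intro hd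
      have := Int.le_of_dvd one_pos hd
      omega
    constructor <;> intro hd <;> apply hM1 <;> rw [← huv]
    · exact dvd_add ((hd.mul_right y).mul_left u) (dvd_mul_left _ v)
    · exact dvd_add ((hd.mul_left x).mul_left u) (dvd_mul_left _ v)
  have hA : A ≠ 0 := key α (hdvd α β hαβ).1
  have hB : B ≠ 0 := key β (hdvd α β hαβ).2
  have hR1 : R₁ ≠ 0 := key r₁ (hdvd r₁ r₂ hr).1
  have hR2 : R₂ ≠ 0 := key r₂ (hdvd r₁ r₂ hr).2
  have hN : N ≠ 0 := key n hn
  set C : ZMod M := B * R₂ * R₁⁻¹ with hC_def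
  set E : ZMod M := A * R₁ * R₂⁻¹ with hE_def
  have hC : C ≠ 0 := mul_ne_zero (mul_ne_zero hB hR2) (inv_ne_zero hR1)
  have hE : E ≠ 0 := mul_ne_zero (mul_ne_zero hA hR1) (inv_ne_zero hR2)
  have hEB : E = B - N * R₁ := by
    rw [hE_def, hcong]
    field_simp
    ring
  have hBE : B ≠ E := by
    intro h
    apply hN
    rw [hEB] at h
    have : N * R₁ = 0 := by linear_combination h
    rcases mul_eq_zero.mp this with h' | h'
    · exact h'
    · exact absurd h' hR1
  -- Step 1: reindex the sum over {1,...,M-1} as a sum over nonzero residues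
  have step1 : frakC M χ α β r₁ r₂ n =
      ∑ x ∈ Finset.univ.filter (fun x : ZMod M => x ≠ 0 ∧ N + B * x⁻¹ ≠ 0),
        (starRingEnd ℂ) (χ (R₁ + x)) * χ (R₂ + A * (N + B * x⁻¹)⁻¹) := by
    rw [frakC]
    refine Finset.sum_nbij' (i := fun z : ℕ => (z : ZMod M)) (j := fun x : ZMod M => x.val)
      ?_ ?_ ?_ ?_ ?_
    · intro z hz
      simp only [Finset.mem_filter, Finset.mem_Icc, Finset.mem_univ, true_and] at hz ⊢
      obtain ⟨⟨hz1, hz2⟩, hz3⟩ := hz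
      refine ⟨?_, hz3⟩
      intro h0
      have := (ZMod.natCast_eq_zero_iff z M).mp h0
      have := Nat.le_of_dvd (by omega) this
      omega
    · intro x hx
      simp only [Finset.mem_filter, Finset.mem_Icc, Finset.mem_univ, true_and] at hx ⊢
      obtain ⟨hx0, hx1⟩ := hx
      have hv : (x.val : ZMod M) = x := by
        rw [ZMod.natCast_val, ZMod.cast_id]
      have hvlt : x.val < M := ZMod.val_lt x
      have hvne : x.val ≠ 0 := fun h => hx0 (by rw [← hv, h, Nat.cast_zero])
      exact ⟨⟨by omega, by omega⟩, by rw [hv]; exact hx1⟩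
    · intro z hz
      simp only [Finset.mem_filter, Finset.mem_Icc] at hz
      exact ZMod.val_cast_of_lt (by omega)
    · intro x hx
      show ((x.val : ℕ) : ZMod M) = x
      rw [ZMod.natCast_val, ZMod.cast_id]
    · intro z hz
      rfl
  -- Step 2: rewrite the summand
  have step2 : ∑ x ∈ Finset.univ.filter (fun x : ZMod M => x ≠ 0 ∧ N + B * x⁻¹ ≠ 0),
        (starRingEnd ℂ) (χ (R₁ + x)) * χ (R₂ + A * (N + B * x⁻¹)⁻¹)
      = ∑ x ∈ Finset.univ.filter
          (fun x : ZMod M => x ≠ 0 ∧ N * x + B ≠ 0 ∧ R₁ + x ≠ 0),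
          χ (C * (N * x + B)⁻¹) := by
    have hDx : ∀ x : ZMod M, x ≠ 0 → N + B * x⁻¹ = (N * x + B) * x⁻¹ := by
      intro x hx
      field_simp
    have hiff : ∀ x : ZMod M, x ≠ 0 → (N + B * x⁻¹ ≠ 0 ↔ N * x + B ≠ 0) := by
      intro x hx
      rw [hDx x hx, mul_ne_zero_iff]
      simp [inv_ne_zero hx]
    have hsub : Finset.univ.filter (fun x : ZMod M => x ≠ 0 ∧ N * x + B ≠ 0 ∧ R₁ + x ≠ 0)
        ⊆ Finset.univ.filter (fun x : ZMod M => x ≠ 0 ∧ N + B * x⁻¹ ≠ 0) := by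
      intro x hx
      simp only [Finset.mem_filter, Finset.mem_univ, true_and] at hx ⊢
      exact ⟨hx.1, (hiff x hx.1).mpr hx.2.1⟩
    have hvan : ∀ x ∈ Finset.univ.filter (fun x : ZMod M => x ≠ 0 ∧ N + B * x⁻¹ ≠ 0),
        x ∉ Finset.univ.filter (fun x : ZMod M => x ≠ 0 ∧ N * x + B ≠ 0 ∧ R₁ + x ≠ 0) →
        (starRingEnd ℂ) (χ (R₁ + x)) * χ (R₂ + A * (N + B * x⁻¹)⁻¹) = 0 := by
      intro x hx hxn
      simp only [Finset.mem_filter, Finset.mem_univ, true_and] at hx hxn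
      have hRx : R₁ + x = 0 := by
        by_contra hRx
        exact hxn ⟨hx.1, (hiff x hx.1).mp hx.2, hRx⟩
      rw [hRx, MulChar.map_nonunit χ not_isUnit_zero, map_zero, zero_mul]
    rw [← Finset.sum_subset hsub hvan]
    apply Finset.sum_congr rfl
    intro x hx
    simp only [Finset.mem_filter, Finset.mem_univ, true_and] at hx
    obtain ⟨hx0, hD, hRx⟩ := hx
    have hinv : (N + B * x⁻¹)⁻¹ = x * (N * x + B)⁻¹ := by
      rw [hDx x hx0, mul_inv, inv_inv]
      ring
    have h9 : R₂ * (N * x + B) + A * x = C * (R₁ + x) := by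
      rw [hC_def, hcong]
      field_simp
      ring
    have hkey : R₂ + A * (N + B * x⁻¹)⁻¹ = C * (N * x + B)⁻¹ * (R₁ + x) := by
      rw [hinv]
      linear_combination (N * x + B)⁻¹ * h9 - R₂ * mul_inv_cancel₀ hD
    rw [hkey, map_mul]
    calc (starRingEnd ℂ) (χ (R₁ + x)) * (χ (C * (N * x + B)⁻¹) * χ (R₁ + x))
        = χ (C * (N * x + B)⁻¹) * ((starRingEnd ℂ) (χ (R₁ + x)) * χ (R₁ + x)) := by ring
      _ = χ (C * (N * x + B)⁻¹) := by rw [conj_mul_self_char χ hRx, mul_one]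
  -- Step 3: reindex by u = N x + B
  have step3 : ∑ x ∈ Finset.univ.filter
          (fun x : ZMod M => x ≠ 0 ∧ N * x + B ≠ 0 ∧ R₁ + x ≠ 0),
          χ (C * (N * x + B)⁻¹)
      = ∑ u ∈ Finset.univ.filter (fun u : ZMod M => u ≠ 0 ∧ u ≠ B ∧ u ≠ E),
          χ (C * u⁻¹) := by
    have hNN : N * N⁻¹ = 1 := mul_inv_cancel₀ hN
    refine Finset.sum_nbij' (i := fun x : ZMod M => N * x + B)
      (j := fun u : ZMod M => N⁻¹ * (u - B)) ?_ ?_ ?_ ?_ ?_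
    · intro x hx
      simp only [Finset.mem_filter, Finset.mem_univ, true_and] at hx ⊢
      obtain ⟨hx0, hD, hRx⟩ := hx
      refine ⟨hD, ?_, ?_⟩
      · intro h
        apply hx0
        have hNx : N * x = 0 := by linear_combination h
        rcases mul_eq_zero.mp hNx with h' | h'
        · exact absurd h' hN
        · exact h'
      · intro h
        apply hRx
        rw [hEB] at h
        have hNx : N * (R₁ + x) = 0 := by linear_combination h
        rcases mul_eq_zero.mp hNx with h' | h'
        · exact absurd h' hN
        · exact h'
    · intro u hu
      simp only [Finset.mem_filter, Finset.mem_univ, true_and] at hu ⊢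
      obtain ⟨hu0, huB, huE⟩ := hu
      refine ⟨?_, ?_, ?_⟩
      · intro h
        rcases mul_eq_zero.mp h with h' | h'
        · exact absurd h' (inv_ne_zero hN)
        · exact huB (by linear_combination h')
      · have : N * (N⁻¹ * (u - B)) + B = u := by
          linear_combination (u - B) * hNN
        rw [this]
        exact hu0
      · intro h
        apply huE
        rw [hEB]
        linear_combination N * h - (u - B) * hNN
    · intro x hx
      field_simp
      ring
    · intro u hu
      show N * (N⁻¹ * (u - B)) + B = u
      linear_combination (u - B) * hNN
    · intro x hx
      rfl
  -- Step 4: evaluate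
  have hfull : ∑ u : ZMod M, χ (C * u⁻¹) = 0 := by
    have h1 : ∑ u : ZMod M, χ (C * u⁻¹) = ∑ u : ZMod M, χ (C * u) :=
      Finset.sum_nbij' (i := fun u : ZMod M => u⁻¹) (j := fun u : ZMod M => u⁻¹)
        (fun _ _ => Finset.mem_univ _) (fun _ _ => Finset.mem_univ _)
        (fun u _ => inv_inv u) (fun u _ => inv_inv u) (fun u _ => rfl)
    have h2 : ∑ u : ZMod M, χ (C * u) = ∑ u : ZMod M, χ u :=
      Finset.sum_nbij' (i := fun u : ZMod M => C * u) (j := fun u : ZMod M => C⁻¹ * u)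
        (fun _ _ => Finset.mem_univ _) (fun _ _ => Finset.mem_univ _)
        (fun u _ => inv_mul_cancel_left₀ hC u) (fun u _ => mul_inv_cancel_left₀ hC u)
        (fun u _ => rfl)
    rw [h1, h2]
    exact MulChar.sum_eq_zero_of_ne_one hχ
  have step4 : ∑ u ∈ Finset.univ.filter (fun u : ZMod M => u ≠ 0 ∧ u ≠ B ∧ u ≠ E),
        χ (C * u⁻¹)
      = - χ (C * B⁻¹) - χ (C * E⁻¹) := by
    have h0B : (0 : ZMod M) ≠ B := fun h => hB h.symm
    have h0E : (0 : ZMod M) ≠ E := fun h => hE h.symm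
    have hset : Finset.univ.filter (fun u : ZMod M => u ≠ 0 ∧ u ≠ B ∧ u ≠ E)
        = Finset.univ \ {0, B, E} := by
      ext u
      simp only [Finset.mem_filter, Finset.mem_univ, true_and, Finset.mem_sdiff,
        Finset.mem_insert, Finset.mem_singleton]
      tauto
    rw [hset, Finset.sum_sdiff_eq_sub (Finset.subset_univ _), hfull]
    rw [Finset.sum_insert (by simp [h0B, h0E]), Finset.sum_insert (by simp [hBE]),
      Finset.sum_singleton]
    rw [inv_zero, mul_zero, MulChar.map_nonunit χ not_isUnit_zero]
    ring
  -- Step 5: final algebra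
  have hCB : C * B⁻¹ = R₂ * R₁⁻¹ := by
    rw [hC_def]
    field_simp
  have hCE : C * E⁻¹ = (R₂ * R₁⁻¹) ^ 2 * (B * A⁻¹) := by
    rw [hC_def, hE_def]
    field_simp
  have h2 : χ ((R₂ * R₁⁻¹) ^ 2 * (B * A⁻¹)) = (χ (R₂ * R₁⁻¹)) ^ 2 * χ (B * A⁻¹) := by
    rw [map_mul, map_pow]
  rw [step1, step2, step3, step4, hCB, hCE, h2]
  ring
end
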